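/- Let a > 0 and j ∈ ℕ. Then for almost every u > 0, C_a(u, 1+2j) = − F₊(𝟙_{(0,a]}(t) · t^(2j))(u), where 𝟙_{(0,a]}(t) · t^(2j) denotes the function equal to t^(2j) for 0 < t ≤ a and 0 for t > a. -/

import Mathlib

open MeasureTheory Complex Set Real Filter Asymptotics Topology

noncomputable section

namespace St9

def trg (n : ℕ) (x : ℝ) : ℝ := if Even n then Real.cos x else Real.sin x

lemma trg_abs_le (n : ℕ) (x : ℝ) : |trg n x| ≤ 1 := by
  unfold trg; split
  · exact Real.abs_cos_le_one x
  · exact Real.abs_sin_le_one x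

lemma trg_continuous (n : ℕ) : Continuous (trg n) := by
  unfold trg; split
  · exact Real.continuous_cos
  · exact Real.continuous_sin

lemma hasDerivAt_trg (n : ℕ) (c t : ℝ) :
    HasDerivAt (fun t => trg (n+1) (c*t)) ((-1:ℝ)^n * c * trg n (c*t)) t := by
  have hct : HasDerivAt (fun t : ℝ => c * t) c t := by
    simpa using (hasDerivAt_id t).const_mul c
  rcases Nat.even_or_odd n with he | ho
  · have h := (Real.hasDerivAt_sin (c*t)).comp t hct
    have heq : (fun t => trg (n+1) (c*t)) = fun t => Real.sin (c*t) := by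
      funext x; simp [trg, Nat.even_add_one, he]
    rw [heq, show (-1:ℝ)^n * c * trg n (c*t) = Real.cos (c*t) * c by
      simp [trg, he, he.neg_one_pow]; ring]
    exact h
  · have h := (Real.hasDerivAt_cos (c*t)).comp t hct
    have heq : (fun t => trg (n+1) (c*t)) = fun t => Real.cos (c*t) := by
      funext x; simp [trg, Nat.even_add_one, Nat.not_even_iff_odd.2 ho]
    rw [heq, show (-1:ℝ)^n * c * trg n (c*t) = -Real.sin (c*t) * c by
      simp [trg, Nat.not_even_iff_odd.2 ho, ho.neg_one_pow]; ring]
    exact h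

def Jint (a c : ℝ) (n : ℕ) (w : ℂ) : ℂ :=
  ∫ t in Ioi a, (trg n (c*t) : ℂ) * (t:ℂ) ^ (w - 1 - n)

lemma cont_cpow_aux (s : ℂ) : ContinuousOn (fun t : ℝ => (t:ℂ) ^ s) (Ioi (0:ℝ)) := by
  intro t ht
  exact ((continuousAt_cpow_const (a := (t:ℂ)) (Or.inl (by
    simpa using ht))).comp Complex.continuous_ofReal.continuousAt).continuousWithinAt

lemma integrableOn_trg_cpow {a : ℝ} (ha : 0 < a) (c : ℝ) (n : ℕ) {w : ℂ}
    (hw : w.re < n) :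
    IntegrableOn (fun t : ℝ => (trg n (c*t) : ℂ) * (t:ℂ) ^ (w - 1 - n)) (Ioi a) := by
  have hmeas : AEStronglyMeasurable
      (fun t : ℝ => (trg n (c*t) : ℂ) * (t:ℂ) ^ (w - 1 - n)) (volume.restrict (Ioi a)) := by
    apply ContinuousOn.aestronglyMeasurable _ measurableSet_Ioi
    exact ((Complex.continuous_ofReal.comp
      ((trg_continuous n).comp (continuous_const.mul continuous_id))).continuousOn).mul
      ((cont_cpow_aux (w-1-n)).mono (fun t ht => lt_trans ha ht))
  have hint : IntegrableOn (fun t : ℝ => t ^ (w.re - 1 - n)) (Ioi a) :=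
    integrableOn_Ioi_rpow_of_lt (by linarith) ha
  refine hint.integrable.mono' hmeas ?_
  filter_upwards [ae_restrict_mem measurableSet_Ioi] with t ht
  have ht0 : (0:ℝ) < t := lt_trans ha ht
  have hnorm : ‖(t:ℂ) ^ (w - 1 - n)‖ = t ^ (w.re - 1 - n) := by
    rw [Complex.norm_cpow_eq_rpow_re_of_pos ht0]
    norm_num
  rw [norm_mul, hnorm, Complex.norm_real, Real.norm_eq_abs]
  calc |trg n (c*t)| * t ^ (w.re - 1 - n) ≤ 1 * t ^ (w.re - 1 - n) := by
        apply mul_le_mul_of_nonneg_right (trg_abs_le n _) (Real.rpow_nonneg ht0.le _)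
    _ = t ^ (w.re - 1 - ↑n : ℝ) := one_mul _

/-- Integration by parts: recursion for the entire extension. -/
lemma jint_rec {a c : ℝ} (ha : 0 < a) (hc : 0 < c) (k : ℕ) {w : ℂ} (hw : w.re < k) :
    Jint a c k w = -((-1:ℂ)^k) * (trg (k+1) (c*a) : ℂ) * (a:ℂ)^(w-1-k)/c
      + (-((-1:ℂ)^k) * (w-1-k)/c) * Jint a c (k+1) w := by
  set P : ℝ → ℂ := fun t => ((-1:ℂ)^k / c) * ((trg (k+1) (c*t) : ℂ) * (t:ℂ)^(w-1-k)) with hP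
  set F : ℝ → ℂ := fun t => (trg k (c*t) : ℂ) * (t:ℂ)^(w-1-k) with hF
  set Gf : ℝ → ℂ := fun t => ((-1:ℂ)^k * (w-1-k) / c) *
    ((trg (k+1) (c*t) : ℂ) * (t:ℂ)^(w-1-(k+1:ℕ))) with hGf
  have hderiv : ∀ t ∈ Ioi (0:ℝ), HasDerivAt P (F t + Gf t) t := by
    intro t ht0
    rw [mem_Ioi] at ht0
    have h1 : HasDerivAt (fun t : ℝ => ((trg (k+1) (c*t) : ℝ) : ℂ))
        (((-1:ℝ)^k * c * trg k (c*t) : ℝ) : ℂ) t := (hasDerivAt_trg k c t).ofReal_comp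
    have h2 : HasDerivAt (fun t : ℝ => (t:ℂ)^(w-1-k))
        ((w-1-k) * (t:ℂ)^(w-1-k-1)) t := by
      exact HasDerivAt.comp_ofReal
        (Complex.hasStrictDerivAt_cpow_const (by simpa using ht0)).hasDerivAt
    have h3 := (h1.mul h2).const_mul ((-1:ℂ)^k / c)
    convert h3 using 1
    · rfl
    · rfl
    have hexp : (t:ℂ)^(w-1-(k+1:ℕ)) = (t:ℂ)^(w-1-k-1) := by
      congr 1; push_cast; ring
    have hsq : ((-1:ℂ))^k * ((-1:ℂ))^k = 1 := by
      rw [← pow_add]; exact Even.neg_one_pow ⟨k, by ring⟩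
    rw [hF, hGf]
    beta_reduce
    rw [hexp]
    push_cast
    have hc0 : (c:ℂ) ≠ 0 := by exact_mod_cast hc.ne'
    field_simp
    ring_nf
    rw [show ((-1:ℂ))^(k*2) = 1 from Even.neg_one_pow ⟨k, by ring⟩]
    ring
  have hFint : IntegrableOn F (Ioi a) := integrableOn_trg_cpow ha c k hw
  have hGint : IntegrableOn Gf (Ioi a) := by
    exact (integrableOn_trg_cpow ha c (k+1) (by push_cast; linarith)).const_mul _
  have htend : Tendsto P atTop (𝓝 0) := by
    have hb : Tendsto (fun t : ℝ => (1/c) * t ^ (-(1 + k - w.re))) atTop (𝓝 0) := by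
      simpa using (tendsto_rpow_neg_atTop (y := 1 + k - w.re) (by linarith)).const_mul (1/c)
    apply squeeze_zero_norm' _ hb
    filter_upwards [eventually_gt_atTop 0] with t ht0
    have hcp : ‖(t:ℂ) ^ (w - 1 - k)‖ = t ^ (w.re - 1 - k) := by
      rw [Complex.norm_cpow_eq_rpow_re_of_pos ht0]
      norm_num
    have hPn : ‖P t‖ = (1/c) * (|trg (k+1) (c*t)| * t ^ (w.re - 1 - k)) := by
      rw [hP]
      beta_reduce
      rw [norm_mul, norm_mul, hcp]
      simp [abs_of_pos hc]
      try ring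
    rw [hPn, show -(1 + (k:ℝ) - w.re) = w.re - 1 - k by ring]
    rw [mul_le_mul_iff_right₀ (by positivity)]
    calc |trg (k+1) (c*t)| * t ^ (w.re - 1 - (k:ℝ)) ≤ 1 * t ^ (w.re - 1 - (k:ℝ)) :=
          mul_le_mul_of_nonneg_right (trg_abs_le _ _) (Real.rpow_nonneg ht0.le _)
      _ = t ^ (w.re - 1 - (k:ℝ)) := one_mul _
  have hcont : ContinuousWithinAt P (Ici a) a :=
    (hderiv a ha).continuousAt.continuousWithinAt
  have hftc := integral_Ioi_of_hasDerivAt_of_tendsto hcont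
    (fun t ht => hderiv t (lt_trans ha ht)) (hFint.add hGint) htend
  have hsplit : ∫ t in Ioi a, (F t + Gf t) = Jint a c k w
      + ((-1:ℂ)^k * (w-1-k)/c) * Jint a c (k+1) w := by
    rw [integral_add hFint hGint]
    congr 1
    rw [hGf, Jint]
    beta_reduce
    rw [MeasureTheory.integral_const_mul]
  rw [hsplit] at hftc
  have hPa : P a = ((-1:ℂ)^k / c) * ((trg (k+1) (c*a) : ℂ) * (a:ℂ)^(w-1-k)) := rfl
  have key : Jint a c k w = -P a - ((-1:ℂ)^k * (w-1-k)/c) * Jint a c (k+1) w := by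
    have := hftc
    rw [zero_sub] at this
    linear_combination this
  rw [key, hPa]
  ring




/-- `Jint` as a Mellin transform. -/
lemma jint_eq_mellin {a : ℝ} (ha : 0 < a) (c : ℝ) (n : ℕ) (w : ℂ) :
    Jint a c n w = mellin ((Ioi a).indicator (fun t : ℝ => (trg n (c*t) : ℂ))) (w - n) := by
  rw [mellin, Jint]
  have h1 : ∀ t : ℝ, (t:ℂ) ^ (w - n - 1) • (Ioi a).indicator (fun t : ℝ => (trg n (c*t) : ℂ)) t
      = (Ioi a).indicator (fun t : ℝ => (trg n (c*t) : ℂ) * (t:ℂ) ^ (w - 1 - n)) t := by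
    intro t
    by_cases ht : t ∈ Ioi a
    · rw [Set.indicator_of_mem ht, Set.indicator_of_mem ht, smul_eq_mul,
        show w - n - 1 = w - 1 - n by ring]
      ring
    · rw [Set.indicator_of_notMem ht, Set.indicator_of_notMem ht, smul_zero]
  simp_rw [h1]
  rw [MeasureTheory.setIntegral_indicator measurableSet_Ioi,
    show Ioi (0:ℝ) ∩ Ioi a = Ioi a by rw [Set.Ioi_inter_Ioi, sup_eq_right.mpr ha.le]]

lemma jint_differentiableAt {a : ℝ} (ha : 0 < a) (c : ℝ) (n : ℕ) {w : ℂ}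
    (hw : w.re < n) : DifferentiableAt ℂ (Jint a c n) w := by
  set g : ℝ → ℂ := (Ioi a).indicator (fun t : ℝ => (trg n (c*t) : ℂ)) with hg
  have hgm : AEStronglyMeasurable g volume :=
    ((Complex.continuous_ofReal.comp ((trg_continuous n).comp
      (continuous_const.mul continuous_id))).stronglyMeasurable.indicator
      measurableSet_Ioi).aestronglyMeasurable
  have hgb : ∀ t : ℝ, ‖g t‖ ≤ 1 := by
    intro t
    rw [hg]
    by_cases ht : t ∈ Ioi a
    · rw [Set.indicator_of_mem ht]
      simpa using trg_abs_le n (c*t)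
    · rw [Set.indicator_of_notMem ht]; simp
  have hloc : LocallyIntegrableOn g (Ioi (0:ℝ)) := by
    apply MeasureTheory.LocallyIntegrable.locallyIntegrableOn
    rw [MeasureTheory.locallyIntegrable_iff]
    intro K hK
    exact Measure.integrableOn_of_bounded hK.measure_lt_top.ne hgm
      (ae_of_all _ fun t => hgb t)
  have htop : g =O[atTop] (fun t : ℝ => t ^ (-(0:ℝ))) := by
    apply IsBigO.of_bound 1
    filter_upwards [eventually_ge_atTop (0:ℝ)] with t ht
    rw [neg_zero, Real.rpow_zero]
    simpa using hgb t
  have hbot : g =O[𝓝[>] (0:ℝ)] (fun t : ℝ => t ^ (-(w.re - n - 1))) := by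
    apply IsBigO.of_bound 0
    filter_upwards [Ioo_mem_nhdsGT ha] with t ht
    rw [hg, Set.indicator_of_notMem (by simpa using ht.2.le : ¬ t ∈ Ioi a)]
    simp
  have hdm : DifferentiableAt ℂ (mellin g) (w - n) :=
    mellin_differentiableAt_of_isBigO_rpow hloc htop (by simpa using hw) hbot
      (by simp)
  have heq : Jint a c n = fun w => mellin g (w - n) := by
    funext v; exact jint_eq_mellin ha c n v
  rw [heq]
  exact hdm.comp (f := fun v : ℂ => v - (n:ℂ)) w ((differentiable_id.sub_const (n:ℂ)) w)

/-- boundary term at level `k`. -/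
def bterm (a c : ℝ) (k : ℕ) (w : ℂ) : ℂ :=
  -((-1:ℂ)^k) * (trg (k+1) (c*a) : ℂ) * (a:ℂ)^(w-1-k)/c

/-- recursion coefficient at level `k`. -/
def coeff (c : ℝ) (k : ℕ) (w : ℂ) : ℂ := -((-1:ℂ)^k) * (w-1-k)/c

/-- The analytic extension tower: `Ext a c N m` is analytic on `re w < N` and agrees with
`Jint a c (N-m)` on `re w < N - m`. -/
def Ext (a c : ℝ) (N : ℕ) : ℕ → ℂ → ℂ
  | 0 => Jint a c N
  | m+1 => fun w => bterm a c (N-m-1) w + coeff c (N-m-1) w * Ext a c N m w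

lemma ext_differentiableOn {a c : ℝ} (ha : 0 < a) (N : ℕ) (m : ℕ) :
    DifferentiableOn ℂ (Ext a c N m) {w : ℂ | w.re < N} := by
  induction m with
  | zero =>
    intro w hw
    exact (jint_differentiableAt ha c N hw).differentiableWithinAt
  | succ m ih =>
    intro w hw
    have hb : DifferentiableAt ℂ (bterm a c (N-m-1)) w := by
      unfold bterm
      apply DifferentiableAt.div_const
      apply DifferentiableAt.mul (differentiableAt_const _)
      exact DifferentiableAt.const_cpow ((differentiableAt_id.sub_const _).sub_const _)
        (Or.inl (ofReal_ne_zero.mpr ha.ne'))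
    have hco : DifferentiableAt ℂ (coeff c (N-m-1)) w := by
      unfold coeff
      exact (((differentiableAt_id.sub_const _).sub_const _).const_mul _).div_const _
    exact (hb.differentiableWithinAt).add
      ((hco.differentiableWithinAt).mul (ih w hw))

lemma ext_eq_jint {a c : ℝ} (ha : 0 < a) (hc : 0 < c) (N : ℕ) :
    ∀ m, m ≤ N → ∀ w : ℂ, w.re < (N:ℝ) - m → Ext a c N m w = Jint a c (N-m) w := by
  intro m
  induction m with
  | zero => intro _ w _; simp [Ext]
  | succ m ih =>
    intro hm w hw
    have hm' : m ≤ N := le_of_lt (Nat.lt_of_succ_le hm)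
    have hk : N - m - 1 + 1 = N - m := by omega
    have hcast : ((N - m - 1 : ℕ) : ℝ) = (N:ℝ) - m - 1 := by
      have : ((N - m - 1 : ℕ) : ℝ) = ((N:ℕ) : ℝ) - ((m:ℕ):ℝ) - 1 := by
        rw [Nat.cast_sub (by omega), Nat.cast_sub (by omega)]; norm_num
      simpa using this
    have hw' : w.re < ((N - m - 1 : ℕ) : ℝ) := by rw [hcast]; push_cast at hw ⊢; linarith
    have hrec := jint_rec ha hc (N - m - 1) (w := w) hw'
    rw [hk] at hrec
    have hEm : Ext a c N m w = Jint a c (N-m) w := by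
      apply ih hm' w
      push_cast at hw ⊢; linarith
    show bterm a c (N-m-1) w + coeff c (N-m-1) w * Ext a c N m w = _
    rw [hEm, show N-(m+1) = N-m-1 from by omega, hrec]
    simp only [bterm, coeff, hk]

/-- The finite-interval integrals. -/
def Kint (a c : ℝ) (j k : ℕ) : ℂ :=
  ∫ t in Ioc (0:ℝ) a, (trg k (c*t) : ℂ) * (t:ℂ) ^ (2*j-k : ℕ)

lemma kint_top {a c : ℝ} (ha : 0 < a) (hc : 0 < c) (j : ℕ) :
    Kint a c j (2*j) = (Real.sin (c*a) : ℂ)/c := by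
  have htr : ∀ x : ℝ, trg (2*j) x = Real.cos x := fun x => by
    simp [trg, Even.mul_right even_two j]
  rw [Kint]
  simp only [htr, Nat.sub_self, pow_zero, mul_one]
  rw [← intervalIntegral.integral_of_le ha.le]
  have hint : (∫ t in (0:ℝ)..a, ((Real.cos (c*t) : ℝ) : ℂ))
      = ∫ t in (0:ℝ)..a, Complex.cos ((c:ℂ)*t) := by
    apply intervalIntegral.integral_congr
    intro x _
    beta_reduce
    rw [← Complex.ofReal_mul, Complex.ofReal_cos]
  rw [hint, integral_cos_mul_complex (by exact_mod_cast hc.ne') 0 a]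
  rw [← Complex.ofReal_mul, ← Complex.ofReal_mul, ← Complex.ofReal_sin, ← Complex.ofReal_sin]
  norm_num

lemma kint_rec {a c : ℝ} (ha : 0 < a) (hc : 0 < c) {j k : ℕ} (hk : k < 2*j) :
    Kint a c j k = -bterm a c k (2*(j:ℂ)+1) + coeff c k (2*(j:ℂ)+1) * Kint a c j (k+1) := by
  set m : ℕ := 2*j - k with hm
  have hm1 : 1 ≤ m := by omega
  have hmc : ((m:ℕ):ℂ) = 2*(j:ℂ)+1 - 1 - k := by
    rw [hm, Nat.cast_sub hk.le]; push_cast; ring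
  set P : ℝ → ℂ := fun x => ((-1:ℂ)^k / c) * ((trg (k+1) (c*x) : ℂ) * (x:ℂ)^(m:ℕ)) with hP
  set F : ℝ → ℂ := fun x => (trg k (c*x) : ℂ) * (x:ℂ)^(m:ℕ) with hF
  set Gf : ℝ → ℂ := fun x => ((-1:ℂ)^k * m / c) * ((trg (k+1) (c*x) : ℂ) * (x:ℂ)^(m-1:ℕ)) with hGf
  have hderiv : ∀ x : ℝ, HasDerivAt P (F x + Gf x) x := by
    intro x
    have h1 : HasDerivAt (fun x : ℝ => ((trg (k+1) (c*x) : ℝ) : ℂ))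
        (((-1:ℝ)^k * c * trg k (c*x) : ℝ) : ℂ) x := (hasDerivAt_trg k c x).ofReal_comp
    have h2 : HasDerivAt (fun x : ℝ => ((x:ℂ))^(m:ℕ)) ((m:ℂ) * (x:ℂ)^(m-1:ℕ)) x :=
      HasDerivAt.comp_ofReal (hasDerivAt_pow m (x:ℂ))
    have h3 := (h1.mul h2).const_mul ((-1:ℂ)^k / c)
    convert h3 using 1
    · rfl
    · rfl
    rw [hF, hGf]
    beta_reduce
    push_cast
    have hc0 : (c:ℂ) ≠ 0 := by exact_mod_cast hc.ne'
    field_simp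
    ring_nf
    rw [show ((-1:ℂ))^(k*2) = 1 from Even.neg_one_pow ⟨k, by ring⟩]
    ring
  have hcontF : Continuous F := by
    rw [hF]
    exact (Complex.continuous_ofReal.comp ((trg_continuous k).comp
      (continuous_const.mul continuous_id))).mul
      ((Complex.continuous_ofReal.pow m))
  have hcontG : Continuous Gf := by
    rw [hGf]
    exact continuous_const.mul ((Complex.continuous_ofReal.comp ((trg_continuous (k+1)).comp
      (continuous_const.mul continuous_id))).mul (Complex.continuous_ofReal.pow (m-1)))
  have hftc := intervalIntegral.integral_eq_sub_of_hasDerivAt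
    (f := P) (f' := fun x => F x + Gf x) (a := (0:ℝ)) (b := a)
    (fun x _ => hderiv x) ((hcontF.add hcontG).intervalIntegrable 0 a)
  have hP0 : P 0 = 0 := by
    rw [hP]; beta_reduce
    rw [Complex.ofReal_zero, zero_pow (by omega : m ≠ 0)]
    ring
  have hsplit : (∫ x in (0:ℝ)..a, (F x + Gf x))
      = Kint a c j k + ((-1:ℂ)^k * m / c) * Kint a c j (k+1) := by
    rw [intervalIntegral.integral_add (hcontF.intervalIntegrable 0 a)
      (hcontG.intervalIntegrable 0 a)]
    congr 1
    · rw [hF, Kint, ← intervalIntegral.integral_of_le ha.le, hm]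
    · rw [hGf, Kint, ← intervalIntegral.integral_of_le ha.le,
        show 2*j-(k+1) = m-1 from by omega]
      rw [intervalIntegral.integral_const_mul]
  rw [hsplit, hP0, sub_zero] at hftc
  have hbt : -bterm a c k (2*(j:ℂ)+1) = P a := by
    rw [bterm, hP]
    beta_reduce
    rw [← hmc, Complex.cpow_natCast]
    ring
  have hcf : coeff c k (2*(j:ℂ)+1) = -((-1:ℂ)^k * m / c) := by
    rw [coeff, ← hmc]
    ring
  rw [hbt, hcf]
  linear_combination hftc

lemma ext_eval {a c : ℝ} (ha : 0 < a) (hc : 0 < c) (j : ℕ) :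
    ∀ i, i ≤ 2*j → Ext a c (2*j+2) ((2*j+2) - (2*j - i)) (2*(j:ℂ)+1) = - Kint a c j (2*j - i) := by
  intro i
  induction i with
  | zero =>
    intro _
    have h1 : (2*j+2) - (2*j - 0) = 2 := by omega
    rw [h1, Nat.sub_zero]
    have h2 : Ext a c (2*j+2) 2 (2*(j:ℂ)+1)
        = bterm a c (2*j) (2*(j:ℂ)+1) + coeff c (2*j) (2*(j:ℂ)+1) * Ext a c (2*j+2) 1 (2*(j:ℂ)+1) := by
      show Ext a c (2*j+2) (1+1) _ = _
      rw [show Ext a c (2*j+2) (1+1) = fun w => bterm a c ((2*j+2)-1-1) w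
        + coeff c ((2*j+2)-1-1) w * Ext a c (2*j+2) 1 w from rfl]
      beta_reduce
      rw [show (2*j+2)-1-1 = 2*j from by omega]
    have hcf : coeff c (2*j) (2*(j:ℂ)+1) = 0 := by
      rw [coeff]
      rw [show (2*(j:ℂ)+1) - 1 - ((2*j : ℕ):ℂ) = 0 from by push_cast; ring]
      ring
    have hbt : bterm a c (2*j) (2*(j:ℂ)+1) = -((Real.sin (c*a) : ℂ)/c) := by
      rw [bterm]
      rw [show (2*(j:ℂ)+1) - 1 - ((2*j : ℕ):ℂ) = 0 from by push_cast; ring,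
        Complex.cpow_zero,
        show ((-1:ℂ))^(2*j) = 1 from Even.neg_one_pow ⟨j, by ring⟩]
      rw [show trg (2*j+1) (c*a) = Real.sin (c*a) from by
        simp [trg, Nat.even_add_one, Even.mul_right even_two j]]
      ring
    rw [h2, hcf, hbt, kint_top ha hc j]
    ring
  | succ i ih =>
    intro hi
    have hih := ih (by omega)
    set k : ℕ := 2*j - (i+1) with hk
    have hk2j : k < 2*j := by omega
    have hkk : 2*j - i = k + 1 := by omega
    have hNk : (2*j+2) - k = ((2*j+2) - k - 1) + 1 := by omega
    have hunf : Ext a c (2*j+2) ((2*j+2) - k) (2*(j:ℂ)+1)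
        = bterm a c k (2*(j:ℂ)+1)
          + coeff c k (2*(j:ℂ)+1) * Ext a c (2*j+2) ((2*j+2) - (k+1)) (2*(j:ℂ)+1) := by
      rw [hNk]
      rw [show Ext a c (2*j+2) (((2*j+2) - k - 1) + 1) = fun w => bterm a c ((2*j+2)-((2*j+2)-k-1)-1) w
        + coeff c ((2*j+2)-((2*j+2)-k-1)-1) w * Ext a c (2*j+2) ((2*j+2)-k-1) w from rfl]
      beta_reduce
      rw [show (2*j+2)-((2*j+2)-k-1)-1 = k from by omega,
        show (2*j+2)-k-1 = (2*j+2)-(k+1) from by omega]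
    rw [hkk] at hih
    rw [hunf, hih, kint_rec ha hc hk2j]
    ring

end St9

/-- The measure `dt` on `(0,∞)`. -/
def mu : Measure ℝ := volume.restrict (Ioi 0)

/-- `K = L²((0,∞), dt)`. -/
abbrev Kspace := Lp ℂ 2 mu

/-- `Fp` is the Fourier cosine transform `F₊`: a unitary involution of `K` given, in the
`L²` sense, by `F₊(f)(t) = 2∫₀^∞ cos(2πtu) f(u) du`. -/
def IsCosineTransform (Fp : Kspace ≃ₗᵢ[ℂ] Kspace) : Prop :=
  (∀ f : Kspace, Fp (Fp f) = f) ∧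
  ∀ f : Kspace, Integrable (⇑f) mu →
    ∀ᵐ t ∂mu, (Fp f : ℝ → ℂ) t = 2 * ∫ u, (Real.cos (2 * π * t * u) : ℂ) * f u ∂mu

/-- `f ∈ K_{a,b}`: `f` vanishes a.e. on `(0,a)` and `F₊(f)` vanishes a.e. on `(0,b)`. -/
def MemKab (Fp : Kspace ≃ₗᵢ[ℂ] Kspace) (a b : ℝ) (f : Kspace) : Prop :=
  (∀ᵐ t ∂mu, t < a → (f : ℝ → ℂ) t = 0) ∧
  (∀ᵐ t ∂mu, t < b → (Fp f : ℝ → ℂ) t = 0)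

/-- `C t` is, for each `t > 0`, the entire extension of
`w ↦ 2∫_a^∞ cos(2πut) t^(w−1) dt` (defined for `Re(w) < 0`). -/
def IsCaExtension (a : ℝ) (C : ℝ → ℂ → ℂ) : Prop :=
  ∀ u : ℝ, 0 < u → Differentiable ℂ (C u) ∧
    ∀ w : ℂ, w.re < 0 →
      C u w = 2 * ∫ t in Ioi a, (Real.cos (2 * π * u * t) : ℂ) * (t : ℂ) ^ (w - 1)

/-- The key pointwise computation: for every `u > 0`, the analytic continuation of
`w ↦ 2∫_a^∞ cos(2πut) t^(w−1) dt` evaluated at `w = 2j+1` equals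
`-2∫_0^a cos(2πut) t^(2j) dt`. -/
lemma key_eval {a : ℝ} (ha : 0 < a) {C : ℝ → ℂ → ℂ} (hC : IsCaExtension a C) (j : ℕ)
    {u : ℝ} (hu : 0 < u) :
    C u (2*(j:ℂ)+1)
      = -(2 * ∫ s in Ioc (0:ℝ) a, (Real.cos (2*π*u*s) : ℂ) * (s:ℂ)^(2*j)) := by
  have hc : 0 < 2*π*u := by positivity
  have hopen : IsOpen {w : ℂ | w.re < ((2*j+2 : ℕ):ℝ)} := isOpen_lt Complex.continuous_re continuous_const
  have hana1 : AnalyticOnNhd ℂ (C u) {w : ℂ | w.re < ((2*j+2 : ℕ):ℝ)} :=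
    ((hC u hu).1.differentiableOn).analyticOnNhd hopen
  have hana2 : AnalyticOnNhd ℂ (fun w => 2 * St9.Ext a (2*π*u) (2*j+2) (2*j+2) w) {w : ℂ | w.re < ((2*j+2 : ℕ):ℝ)} :=
    ((differentiableOn_const (2:ℂ)).mul (St9.ext_differentiableOn ha (2*j+2) (2*j+2))).analyticOnNhd hopen
  have hopen0 : IsOpen {w : ℂ | w.re < 0} := isOpen_lt Complex.continuous_re continuous_const
  have hmem : (-1:ℂ) ∈ {w : ℂ | w.re < ((2*j+2 : ℕ):ℝ)} := by
    simp only [mem_setOf_eq, Complex.neg_re, Complex.one_re]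
    have : (0:ℝ) < ((2*j+2 : ℕ):ℝ) := by positivity
    linarith
  have hev : C u =ᶠ[𝓝 (-1:ℂ)] fun w => 2 * St9.Ext a (2*π*u) (2*j+2) (2*j+2) w := by
    filter_upwards [hopen0.mem_nhds (by simp : (-1:ℂ) ∈ {w : ℂ | w.re < 0})] with w hw0
    have hw0' : w.re < 0 := hw0
    rw [(hC u hu).2 w hw0']
    rw [St9.ext_eq_jint ha hc (2*j+2) (2*j+2) le_rfl w (by simpa using hw0')]
    rw [Nat.sub_self, St9.Jint]
    congr 1
    apply setIntegral_congr_fun measurableSet_Ioi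
    intro t _
    simp [St9.trg]
  have heqon := hana1.eqOn_of_preconnected_of_eventuallyEq hana2
    ((convex_halfSpace_re_lt (((2*j+2 : ℕ):ℝ))).isPreconnected) hmem hev
  have hWmem : (2*(j:ℂ)+1) ∈ {w : ℂ | w.re < ((2*j+2 : ℕ):ℝ)} := by
    simp only [mem_setOf_eq]
    have hre : ((2:ℂ) * (j:ℂ) + 1).re = 2*(j:ℝ)+1 := by simp
    rw [hre]
    push_cast
    linarith
  have h1 := heqon hWmem
  have h2 := St9.ext_eval ha hc j (2*j) le_rfl
  rw [Nat.sub_self, Nat.sub_zero] at h2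
  have h3 : St9.Kint a (2*π*u) j 0
      = ∫ s in Ioc (0:ℝ) a, (Real.cos (2*π*u*s) : ℂ) * (s:ℂ)^(2*j) := by
    rw [St9.Kint, Nat.sub_zero]
    apply setIntegral_congr_fun measurableSet_Ioc
    intro t _
    simp [St9.trg]
  rw [h1]
  beta_reduce
  rw [h2, h3]
  ring

/-- let `a > 0` and `j ∈ ℕ`. For almost every `u > 0`,
`C_a(u, 1+2j) = − F₊(𝟙_{(0,a]}(t) t^(2j))(u)`. -/
theorem statement9
    (Fp : Kspace ≃ₗᵢ[ℂ] Kspace) (hFp : IsCosineTransform Fp)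
    (a : ℝ) (ha : 0 < a) (C : ℝ → ℂ → ℂ) (hC : IsCaExtension a C) (j : ℕ)
    (G : Kspace)
    (hG : (G : ℝ → ℂ) =ᵐ[mu] fun t : ℝ => if t ∈ Ioc (0:ℝ) a then (t : ℂ) ^ (2 * j) else 0) :
    ∀ᵐ u ∂mu, C u (2 * j + 1) = -(Fp G : ℝ → ℂ) u := by
  classical
  have hfeq : (fun t : ℝ => if t ∈ Ioc (0:ℝ) a then (t : ℂ) ^ (2 * j) else 0)
      = (Ioc (0:ℝ) a).indicator (fun t : ℝ => (t:ℂ)^(2*j)) := by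
    funext t; simp [Set.indicator_apply]
  have hGint : Integrable (⇑G) mu := by
    refine Integrable.congr ?_ hG.symm
    rw [hfeq]
    have hio : IntegrableOn (fun t : ℝ => (t:ℂ)^(2*j)) (Ioc 0 a) volume :=
      (Complex.continuous_ofReal.pow (2*j)).integrableOn_Ioc
    exact ((integrable_indicator_iff measurableSet_Ioc).2 hio).restrict
  have hFp2 := hFp.2 G hGint
  have hI : ∀ t : ℝ, (∫ u, (Real.cos (2*π*t*u) : ℂ) * G u ∂mu)
      = ∫ s in Ioc (0:ℝ) a, (Real.cos (2*π*t*s) : ℂ) * (s:ℂ)^(2*j) := by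
    intro t
    have e1 : (∫ u, (Real.cos (2*π*t*u) : ℂ) * G u ∂mu)
        = ∫ u, (Ioc (0:ℝ) a).indicator
            (fun s : ℝ => (Real.cos (2*π*t*s) : ℂ) * (s:ℂ)^(2*j)) u ∂mu := by
      apply integral_congr_ae
      filter_upwards [hG] with s hs
      rw [hs]
      by_cases hmem : s ∈ Ioc (0:ℝ) a
      · rw [if_pos hmem, Set.indicator_of_mem hmem]
      · rw [if_neg hmem, Set.indicator_of_notMem hmem, mul_zero]
    rw [e1, show mu = volume.restrict (Ioi 0) from rfl,
      MeasureTheory.setIntegral_indicator measurableSet_Ioc,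
      Set.inter_eq_self_of_subset_right Set.Ioc_subset_Ioi_self]
  filter_upwards [hFp2, ae_restrict_mem (measurableSet_Ioi : MeasurableSet (Ioi (0:ℝ)))]
    with u hu1 hu2
  have hu0 : 0 < u := hu2
  rw [hu1, hI u]
  have := key_eval ha hC j hu0
  rw [this]

end
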